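/- A smooth cubic surface in P³ admits no symmetric determinantal representation: there is no symmetric 3×3 matrix M of linear forms with det M = c·F, c ≠ 0, for F a smooth cubic form. (Equivalently: if M is a determinantal representation of a smooth cubic surface, then M is not equivalent to Mᵗ via M = Mᵗ.) -/

import Mathlib

open MvPolynomial Matrix

set_option linter.unusedSectionVars false
set_option linter.unusedVariables false

section Aux

variable {k : Type*} [Field k]


/-- quadratic form from a coefficient matrix -/
def qf3 (c : Fin 3 → Fin 3 → k) (v : Fin 3 → k) : k :=
  ∑ p : Fin 3, ∑ r : Fin 3, c p r * v p * v r

/-- polarization -/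
def bl3 (c : Fin 3 → Fin 3 → k) (u v : Fin 3 → k) : k :=
  ∑ p : Fin 3, ∑ r : Fin 3, c p r * (u p * v r + v p * u r)

lemma qf3_comb2 (c : Fin 3 → Fin 3 → k) (a b : k) (u v : Fin 3 → k) :
    qf3 c (fun i => a * u i + b * v i)
      = a^2 * qf3 c u + a*b* bl3 c u v + b^2 * qf3 c v := by
  simp only [qf3, bl3, Fin.sum_univ_three]; ring

lemma qf3_comb3 (c : Fin 3 → Fin 3 → k) (a b d : k) (u v w : Fin 3 → k) :
    qf3 c (fun i => a * u i + b * v i + d * w i)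
      = a^2 * qf3 c u + b^2 * qf3 c v + d^2 * qf3 c w
        + a*b * bl3 c u v + a*d * bl3 c u w + b*d * bl3 c v w := by
  simp only [qf3, bl3, Fin.sum_univ_three]; ring

lemma bl3_right (c : Fin 3 → Fin 3 → k) (p u v : Fin 3 → k) (s t : k) :
    bl3 c p (fun i => s * u i + t * v i) = s * bl3 c p u + t * bl3 c p v := by
  simp only [bl3, Fin.sum_univ_three]; ring

variable [IsAlgClosed k]

lemma quad_root (A B C : k) :
    ∃ s t : k, (s ≠ 0 ∨ t ≠ 0) ∧ A*s^2 + B*(s*t) + C*t^2 = 0 := by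
  by_cases hA : A = 0
  · exact ⟨1, 0, Or.inl one_ne_zero, by simp [hA]⟩
  · obtain ⟨r, hr⟩ := IsAlgClosed.exists_root
      (Polynomial.C A * Polynomial.X ^ 2 + Polynomial.C B * Polynomial.X + Polynomial.C C)
      (by have : (Polynomial.C A * Polynomial.X ^ 2 + Polynomial.C B * Polynomial.X
            + Polynomial.C C).degree = 2 := by compute_degree!
          simp [this])
    refine ⟨r, 1, Or.inr one_ne_zero, ?_⟩
    have := hr
    rw [Polynomial.IsRoot] at this
    simp at this
    linear_combination this

lemma quartic_root (A B C D E : k) :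
    ∃ s t : k, (s ≠ 0 ∨ t ≠ 0) ∧
      A*s^4 + B*(s^3*t) + C*(s^2*t^2) + D*(s*t^3) + E*t^4 = 0 := by
  by_cases hA : A = 0
  · exact ⟨1, 0, Or.inl one_ne_zero, by simp [hA]⟩
  · obtain ⟨r, hr⟩ := IsAlgClosed.exists_root
      (Polynomial.C A * Polynomial.X ^ 4 + Polynomial.C B * Polynomial.X ^ 3
        + Polynomial.C C * Polynomial.X ^ 2 + Polynomial.C D * Polynomial.X + Polynomial.C E)
      (by have : (Polynomial.C A * Polynomial.X ^ 4 + Polynomial.C B * Polynomial.X ^ 3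
            + Polynomial.C C * Polynomial.X ^ 2 + Polynomial.C D * Polynomial.X
            + Polynomial.C E).degree = 4 := by compute_degree!
          simp [this])
    refine ⟨r, 1, Or.inr one_ne_zero, ?_⟩
    have := hr
    rw [Polynomial.IsRoot] at this
    simp at this
    linear_combination this

lemma conic_aux (c₁ c₂ : Fin 3 → Fin 3 → k) (p u u' : Fin 3 → k) (m : Fin 3)
    (hpm : p m ≠ 0) (hum : u m = 0) (hu'm : u' m = 0)
    (hind : ∀ b c : k, (∀ i, b * u i + c * u' i = 0) → b = 0 ∧ c = 0)
    (hp : qf3 c₁ p = 0) :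
    ∃ v : Fin 3 → k, v ≠ 0 ∧ qf3 c₁ v = 0 ∧ qf3 c₂ v = 0 := by
  set α : Fin 3 → k := fun i => qf3 c₁ u * p i - bl3 c₁ p u * u i with hα
  set β : Fin 3 → k := fun i =>
    bl3 c₁ u u' * p i - bl3 c₁ p u * u' i - bl3 c₁ p u' * u i with hβ
  set γ : Fin 3 → k := fun i => qf3 c₁ u' * p i - bl3 c₁ p u' * u' i with hγ
  obtain ⟨s, t, hst, hroot⟩ := quartic_root (qf3 c₂ α) (bl3 c₂ α β)
    (qf3 c₂ β + bl3 c₂ α γ) (bl3 c₂ β γ) (qf3 c₂ γ)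
  set w : Fin 3 → k := fun i => s * u i + t * u' i with hw
  -- basic expansions
  have hqw : qf3 c₁ w = s^2 * qf3 c₁ u + s*t * bl3 c₁ u u' + t^2 * qf3 c₁ u' :=
    qf3_comb2 c₁ s t u u'
  have hbw : bl3 c₁ p w = s * bl3 c₁ p u + t * bl3 c₁ p u' := bl3_right c₁ p u u' s t
  set v : Fin 3 → k := fun i => qf3 c₁ w * p i - bl3 c₁ p w * w i with hv
  have hwm : w m = 0 := by simp [hw, hum, hu'm]
  have hx : ∀ i, v i = s^2 * α i + s*t * β i + t^2 * γ i := by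
    intro i
    simp only [hv, hα, hβ, hγ, hw, hqw, hbw, qf3_comb2, bl3_right]
    ring
  have hq1v : qf3 c₁ v = 0 := by
    have hv' : v = fun i => qf3 c₁ w * p i + (-(bl3 c₁ p w)) * w i := by
      funext i; simp [hv]; ring
    rw [hv', qf3_comb2, hp]
    ring
  have hq2v : qf3 c₂ v = 0 := by
    have hv' : v = fun i => s^2 * α i + (s*t) * β i + t^2 * γ i := by
      funext i; rw [hx i]
    rw [hv', qf3_comb3]
    linear_combination hroot
  by_cases hv0 : v = 0
  · -- degenerate case: the line through p and w lies on the first conic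
    have hveq : ∀ i, qf3 c₁ w * p i - bl3 c₁ p w * w i = 0 := by
      intro i; have := congrFun hv0 i; simpa [hv] using this
    have hqw0 : qf3 c₁ w = 0 := by
      have h0 := hveq m
      rw [hwm] at h0
      have h1 : qf3 c₁ w * p m = 0 := by linear_combination h0
      rcases mul_eq_zero.mp h1 with h | h
      · exact h
      · exact absurd h hpm
    have hbw0 : bl3 c₁ p w = 0 := by
      by_contra hne
      have hwz : ∀ i, w i = 0 := by
        intro i
        have := hveq i
        rw [hqw0] at this
        simp at this
        rcases this with h | h
        · exact absurd h hne
        · exact h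
      obtain ⟨hs, ht⟩ := hind s t (by intro i; simpa [hw] using hwz i)
      rcases hst with h | h <;> [exact h hs; exact h ht]
    obtain ⟨a, b, hab, he⟩ := quad_root (qf3 c₂ p) (bl3 c₂ p w) (qf3 c₂ w)
    refine ⟨fun i => a * p i + b * w i, ?_, ?_, ?_⟩
    · intro h0
      have ha : a = 0 := by
        have := congrFun h0 m
        simp [hwm] at this
        rcases this with h | h
        · exact h
        · exact absurd h hpm
      have hb : b = 0 := by
        by_contra hb
        have : ∀ i, (b*s) * u i + (b*t) * u' i = 0 := by
          intro i
          have := congrFun h0 i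
          simp [ha, hw] at this
          rcases this with h | h
          · exact absurd h hb
          · simp [hw] at *
            linear_combination b * h
        obtain ⟨h1, h2⟩ := hind _ _ this
        rcases hst with h | h
        · exact h ((mul_eq_zero.mp h1).resolve_left hb)
        · exact h ((mul_eq_zero.mp h2).resolve_left hb)
      rcases hab with h | h <;> [exact h ha; exact h hb]
    · rw [qf3_comb2, hp, hbw0, hqw0]; ring
    · rw [qf3_comb2]; linear_combination he
  · exact ⟨v, hv0, hq1v, hq2v⟩

lemma conic (c₁ c₂ : Fin 3 → Fin 3 → k) :
    ∃ v : Fin 3 → k, v ≠ 0 ∧ qf3 c₁ v = 0 ∧ qf3 c₂ v = 0 := by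
  obtain ⟨s, t, hst, h⟩ := quad_root (c₁ 0 0) (c₁ 0 1 + c₁ 1 0) (c₁ 1 1)
  set p : Fin 3 → k := ![s, t, 0] with hp
  have hqp : qf3 c₁ p = 0 := by
    simp only [qf3, Fin.sum_univ_three, hp]
    simp [Matrix.cons_val_zero, Matrix.cons_val_one]
    linear_combination h
  rcases hst with hs | ht
  · refine conic_aux c₁ c₂ p ![0,1,0] ![0,0,1] 0 (by simpa [hp]) (by simp) (by simp) ?_ hqp
    intro b c h
    constructor
    · have := h 1; simpa using this
    · have := h 2; simpa using this
  · refine conic_aux c₁ c₂ p ![1,0,0] ![0,0,1] 1 (by simpa [hp]) (by simp) (by simp) ?_ hqp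
    intro b c h
    constructor
    · have := h 0; simpa using this
    · have := h 2; simpa using this




lemma degree_one_single {n : ℕ} (d : Fin n →₀ ℕ) (hd : d.degree = 1) :
    ∃ r, d = Finsupp.single r 1 := by
  have hne : d.support.Nonempty := by
    by_contra h
    rw [Finset.not_nonempty_iff_eq_empty] at h
    simp [Finsupp.support_eq_empty.mp h] at hd
  obtain ⟨r, hr⟩ := hne
  refine ⟨r, ?_⟩
  have hsum : ∑ i ∈ d.support \ {r}, d i + d r = 1 := by
    have := (Finset.sum_eq_sum_sdiff_singleton_add hr d).symm
    have hd' : ∑ i ∈ d.support, d i = 1 := hd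
    omega
  have hdr1 : d r ≥ 1 := Nat.one_le_iff_ne_zero.mpr (Finsupp.mem_support_iff.mp hr)
  have hrest : ∑ i ∈ d.support \ {r}, d i = 0 := by omega
  have hdr : d r = 1 := by omega
  ext i
  by_cases hi : i = r
  · subst hi; simp [hdr]
  · rw [Finsupp.single_apply, if_neg (Ne.symm hi)]
    by_cases hmem : i ∈ d.support
    · exact (Finset.sum_eq_zero_iff.mp hrest i (Finset.mem_sdiff.mpr ⟨hmem, by simp [hi]⟩))
    · exact Finsupp.notMem_support_iff.mp hmem

lemma hom1_repr {n : ℕ} (P : MvPolynomial (Fin n) k) (h : P.IsHomogeneous 1) :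
    P = ∑ r : Fin n, C (coeff (Finsupp.single r 1) P) * X r := by
  ext d
  rw [coeff_sum]
  simp only [coeff_C_mul, coeff_X']
  by_cases hd : ∃ r, d = Finsupp.single r 1
  · obtain ⟨r, rfl⟩ := hd
    rw [Finset.sum_eq_single r]
    · simp
    · intro b _ hbr
      rw [if_neg, mul_zero]
      exact fun hcon => hbr (by
        have := Finsupp.single_left_injective (α := Fin n) (one_ne_zero (α := ℕ))
        exact this hcon)
    · simp
  · rw [Finset.sum_eq_zero, eq_comm]
    · by_contra hc
      obtain ⟨r, hr⟩ := degree_one_single d (by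
        have := h (show coeff d P ≠ 0 from fun h' => hc h'.symm)
        rw [Finsupp.degree_eq_weight_one]
        exact this)
      exact hd ⟨r, hr⟩
    · intro r _
      rw [if_neg, mul_zero]
      exact fun hcon => hd ⟨r, hcon.symm⟩


def ix6 : Fin 6 → Fin 3 × Fin 3 := fun t =>
  match t with
  | 0 => (0,0) | 1 => (1,1) | 2 => (2,2) | 3 => (0,1) | 4 => (0,2) | 5 => (1,2)

lemma key_exists (a : Fin 3 → Fin 3 → Fin 4 → k)
    (hsymm : ∀ i j, a j i = a i j) :
    ∃ (z : Fin 4 → k) (v : Fin 3 → k), z ≠ 0 ∧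
      ∀ i j, ∑ r : Fin 4, a i j r * z r = v i * v j := by
  set Φ : (Fin 4 → k) →ₗ[k] (Fin 6 → k) :=
    { toFun := fun z t => ∑ r : Fin 4, a (ix6 t).1 (ix6 t).2 r * z r
      map_add' := by
        intro z z'; funext t
        simp [mul_add, Finset.sum_add_distrib]
      map_smul' := by
        intro m z; funext t
        simp only [Pi.smul_apply, smul_eq_mul, RingHom.id_apply]
        rw [Finset.mul_sum]
        exact Finset.sum_congr rfl fun _ _ => by ring } with hΦ
  set vec6 : (Fin 3 → k) → Fin 6 → k := fun v t => v (ix6 t).1 * v (ix6 t).2 with hvec6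
  suffices hS : ∃ (z : Fin 4 → k) (v : Fin 3 → k), z ≠ 0 ∧ Φ z = vec6 v by
    obtain ⟨z, v, hz, hzv⟩ := hS
    refine ⟨z, v, hz, ?_⟩
    have key : ∀ t, ∑ r : Fin 4, a (ix6 t).1 (ix6 t).2 r * z r = v (ix6 t).1 * v (ix6 t).2 :=
      fun t => congrFun hzv t
    have k0 : ∑ r : Fin 4, a 0 0 r * z r = v 0 * v 0 := key 0
    have k1 : ∑ r : Fin 4, a 1 1 r * z r = v 1 * v 1 := key 1
    have k2 : ∑ r : Fin 4, a 2 2 r * z r = v 2 * v 2 := key 2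
    have k3 : ∑ r : Fin 4, a 0 1 r * z r = v 0 * v 1 := key 3
    have k4 : ∑ r : Fin 4, a 0 2 r * z r = v 0 * v 2 := key 4
    have k5 : ∑ r : Fin 4, a 1 2 r * z r = v 1 * v 2 := key 5
    have k6 : ∑ r : Fin 4, a 1 0 r * z r = v 1 * v 0 := by
      rw [hsymm 0 1, k3, mul_comm]
    have k7 : ∑ r : Fin 4, a 2 0 r * z r = v 2 * v 0 := by
      rw [hsymm 0 2, k4, mul_comm]
    have k8 : ∑ r : Fin 4, a 2 1 r * z r = v 2 * v 1 := by
      rw [hsymm 1 2, k5, mul_comm]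
    intro i j
    fin_cases i <;> fin_cases j <;>
      first
        | exact k0 | exact k1 | exact k2 | exact k3 | exact k4
        | exact k5 | exact k6 | exact k7 | exact k8
  by_cases hinj : Function.Injective Φ
  · have hrange : Module.finrank k (LinearMap.range Φ) = 4 := by
      rw [LinearMap.finrank_range_of_inj hinj]
      simp
    have hQ : Module.finrank k ((Fin 6 → k) ⧸ LinearMap.range Φ) = 2 := by
      have := Submodule.finrank_quotient_add_finrank (LinearMap.range Φ)
      rw [hrange] at this
      have h6 : Module.finrank k (Fin 6 → k) = 6 := by simp
      omega
    set e : ((Fin 6 → k) ⧸ LinearMap.range Φ) ≃ₗ[k] (Fin 2 → k) :=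
      LinearEquiv.ofFinrankEq _ _ (by rw [hQ]; simp) with he
    set π := (LinearMap.range Φ).mkQ with hπ
    set T : Fin 3 → Fin 3 → (Fin 6 → k) :=
      fun p r t => if (ix6 t).1 = p then (if (ix6 t).2 = r then 1 else 0) else 0 with hT
    set cf : Fin 2 → Fin 3 → Fin 3 → k := fun j p r => e (π (T p r)) j with hcf
    have hdecomp : ∀ v : Fin 3 → k,
        vec6 v = ∑ p : Fin 3, ∑ r : Fin 3, (v p * v r) • T p r := by
      intro v
      funext t
      simp only [hvec6, Finset.sum_apply, Pi.smul_apply, hT, smul_eq_mul,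
        mul_ite, mul_one, mul_zero]
      simp
    have hqf : ∀ (j : Fin 2) (v : Fin 3 → k), e (π (vec6 v)) j = qf3 (cf j) v := by
      intro j v
      rw [hdecomp v, map_sum, map_sum]
      rw [qf3]
      simp only [Finset.sum_apply]
      refine Finset.sum_congr rfl fun p _ => ?_
      rw [map_sum, map_sum]
      simp only [Finset.sum_apply]
      refine Finset.sum_congr rfl fun r _ => ?_
      rw [LinearMap.map_smul, LinearEquiv.map_smul]
      simp only [Pi.smul_apply, smul_eq_mul]
      rw [hcf]; ring
    obtain ⟨v, hv, h0, h1⟩ := conic (cf 0) (cf 1)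
    have hzero : e (π (vec6 v)) = 0 := by
      funext j
      fin_cases j
      · exact (hqf 0 v).trans h0
      · exact (hqf 1 v).trans h1
    have hmem : vec6 v ∈ LinearMap.range Φ := by
      have h2 : π (vec6 v) = 0 := e.map_eq_zero_iff.mp hzero
      rw [hπ, Submodule.mkQ_apply, Submodule.Quotient.mk_eq_zero] at h2
      exact h2
    obtain ⟨z, hzeq⟩ := hmem
    refine ⟨z, v, ?_, hzeq⟩
    intro hz0
    rw [hz0, map_zero] at hzeq
    apply hv
    have h00 : v 0 * v 0 = 0 := (congrFun hzeq 0).symm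
    have h11 : v 1 * v 1 = 0 := (congrFun hzeq 1).symm
    have h22 : v 2 * v 2 = 0 := (congrFun hzeq 2).symm
    funext i
    fin_cases i
    · exact mul_self_eq_zero.mp h00
    · exact mul_self_eq_zero.mp h11
    · exact mul_self_eq_zero.mp h22
  · rw [← LinearMap.ker_eq_bot] at hinj
    obtain ⟨z, hzmem, hz⟩ := Submodule.exists_mem_ne_zero_of_ne_bot hinj
    refine ⟨z, 0, hz, ?_⟩
    rw [LinearMap.mem_ker] at hzmem
    rw [hzmem]
    funext t
    simp [hvec6]

end Aux

/-- A smooth cubic surface admits no symmetric determinantal representation. -/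
theorem stmt5 {k : Type*} [Field k] [IsAlgClosed k]
    (F : MvPolynomial (Fin 4) k) (hF3 : F.IsHomogeneous 3)
    (hsmooth : ∀ z : Fin 4 → k, z ≠ 0 → eval z F = 0 →
      ∃ i, eval z (pderiv i F) ≠ 0) :
    ¬ ∃ (M : Matrix (Fin 3) (Fin 3) (MvPolynomial (Fin 4) k)) (c : k),
        c ≠ 0 ∧ (∀ i j, (M i j).IsHomogeneous 1) ∧ M.det = C c * F ∧ Mᵀ = M := by
  rintro ⟨M, c, hc, hlin, hdet, hsym⟩
  set a : Fin 3 → Fin 3 → Fin 4 → k :=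
    fun i j r => coeff (Finsupp.single r 1) (M i j) with ha
  have hsymm : ∀ i j, a j i = a i j := by
    intro i j
    have hMs : M j i = M i j := by
      have := congrFun (congrFun hsym i) j
      rwa [Matrix.transpose_apply] at this
    funext r
    rw [ha]
    simp only [hMs]
  obtain ⟨z, v, hz, hzv⟩ := key_exists a hsymm
  have hev : ∀ i j, eval z (M i j) = v i * v j := by
    intro i j
    conv_lhs => rw [hom1_repr (M i j) (hlin i j)]
    rw [map_sum]
    simp only [_root_.map_mul, eval_C, eval_X]
    exact hzv i j
  have hF0 : eval z F = 0 := by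
    have h1 := congrArg (eval z) hdet
    rw [Matrix.det_fin_three] at h1
    simp only [map_sub, map_add, _root_.map_mul, eval_C, hev] at h1
    have h2 : c * eval z F = 0 := by linear_combination -h1
    exact (mul_eq_zero.mp h2).resolve_left hc
  have hDer : ∀ i, eval z (pderiv i F) = 0 := by
    intro i
    have h1 := congrArg (fun P => eval z (pderiv i P)) hdet
    rw [Matrix.det_fin_three, pderiv_C_mul] at h1
    simp only [map_sub, map_add, pderiv_mul, _root_.map_mul, eval_C, hev] at h1
    have h2 : c * eval z (pderiv i F) = 0 := by linear_combination -h1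
    exact (mul_eq_zero.mp h2).resolve_left hc
  obtain ⟨i, hi⟩ := hsmooth z hz hF0
  exact hi (hDer i)
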